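/- arXiv:0909.4101 — 2 statements merged into one kernel-verified Lean document; each statement's English description precedes it below -/
import Mathlib

section
/- For every x ∈ S^n and every f ∈ H_d with ‖f‖_W = 1, one has κ̃(f,x) = 1 / dist(f, Σ_ℝ(x)), where dist(f, Σ_ℝ(x)) is the distance in the Bombieri–Weyl norm from f to the set Σ_ℝ(x) of systems having x as a multiple zero. -/
open MvPolynomial Finset ENNReal

/-- Bombieri–Weyl inner product of two polynomials (intended for homogeneous
polynomials of the same degree `d`): `⟨Σ aⱼ xʲ, Σ bⱼ xʲ⟩_W = Σ aⱼ bⱼ / binom(d, j)`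
where `binom(d, j) = d! / (j₀! ⋯ jₙ!)`. -/
noncomputable def bwInner {m : ℕ} (p q : MvPolynomial (Fin m) ℝ) : ℝ :=
  ∑ j ∈ p.support ∪ q.support,
    (p.coeff j * q.coeff j) / (Nat.multinomial Finset.univ j : ℝ)

/-- Bombieri–Weyl norm of one polynomial. -/
noncomputable def bwNorm {m : ℕ} (p : MvPolynomial (Fin m) ℝ) : ℝ :=
  Real.sqrt (bwInner p p)

/-- Bombieri–Weyl norm `‖f‖_W` of a system `f = (f_1, …, f_n)`. -/
noncomputable def bwNormSys {n : ℕ} (f : Fin n → MvPolynomial (Fin (n + 1)) ℝ) : ℝ :=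
  Real.sqrt (∑ i, bwInner (f i) (f i))

/-- Distance (w.r.t. the Bombieri–Weyl norm) from a system `f` to a set `S` of systems. -/
noncomputable def bwDist {n : ℕ} (f : Fin n → MvPolynomial (Fin (n + 1)) ℝ)
    (S : Set (Fin n → MvPolynomial (Fin (n + 1)) ℝ)) : ℝ :=
  sInf ((fun g => bwNormSys (f - g)) '' S)

/-- The unit sphere `Sⁿ ⊆ ℝ^{n+1}`. -/
def unitSphere (n : ℕ) : Set (Fin (n + 1) → ℝ) := {x | ∑ k, x k ^ 2 = 1}

/-- `f` belongs to `H_d`: each component is homogeneous of degree `d i`. -/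
def IsSystem {n : ℕ} (d : Fin n → ℕ) (f : Fin n → MvPolynomial (Fin (n + 1)) ℝ) : Prop :=
  ∀ i, (f i).IsHomogeneous (d i)

/-- The derivative `Df(x)` restricted to the tangent space `T_x Sⁿ = x^⊥` is singular,
i.e. it kills some nonzero tangent vector `v`. -/
def SingularAt {n : ℕ} (f : Fin n → MvPolynomial (Fin (n + 1)) ℝ)
    (x : Fin (n + 1) → ℝ) : Prop :=
  ∃ v : Fin (n + 1) → ℝ, v ≠ 0 ∧ (∑ k, v k * x k = 0) ∧
    ∀ i, ∑ k, MvPolynomial.eval x (MvPolynomial.pderiv k (f i)) * v k = 0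

/-- `Σ_ℝ(x)`: the systems in `H_d` having `x` as a multiple zero. -/
def SigmaRx {n : ℕ} (d : Fin n → ℕ) (x : Fin (n + 1) → ℝ) :
    Set (Fin n → MvPolynomial (Fin (n + 1)) ℝ) :=
  {g | IsSystem d g ∧ (∀ i, MvPolynomial.eval x (g i) = 0) ∧ SingularAt g x}

/-- `Σ_ℝ = ⋃_{x ∈ Sⁿ} Σ_ℝ(x)`: the systems in `H_d` with a multiple zero on `Sⁿ`. -/
def SigmaR {n : ℕ} (d : Fin n → ℕ) : Set (Fin n → MvPolynomial (Fin (n + 1)) ℝ) :=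
  ⋃ x ∈ unitSphere n, SigmaRx d x

/-- The smallest singular value of `diag(1/√dᵢ) · Df(x)|_{T_x Sⁿ}`, i.e.
`inf {‖diag(1/√dᵢ)·Df(x) v‖₂ : v ⊥ x, ‖v‖₂ = 1}`.  This equals
`‖f‖_W · μ̃_norm(f,x)⁻¹`, where `μ̃_norm(f,x) = ‖f‖_W ‖(Df(x)|_{T_x Sⁿ})⁻¹ diag(√dᵢ)‖`
(spectral norm, `+∞` when `Df(x)|_{T_x Sⁿ}` is singular); it is `0` exactly
when `μ̃_norm(f,x) = +∞`. -/
noncomputable def sigmaMin {n : ℕ} (d : Fin n → ℕ)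
    (f : Fin n → MvPolynomial (Fin (n + 1)) ℝ) (x : Fin (n + 1) → ℝ) : ℝ :=
  sInf ((fun v => Real.sqrt (∑ i,
      ((∑ k, MvPolynomial.eval x (MvPolynomial.pderiv k (f i)) * v k) / Real.sqrt (d i)) ^ 2)) ''
    {v : Fin (n + 1) → ℝ | (∑ k, v k * x k = 0) ∧ ∑ k, v k ^ 2 = 1})

/-- `κ̃(f, x) = ‖f‖_W / (‖f‖_W² μ̃_norm(f,x)⁻² + ‖f(x)‖₂²)^{1/2}` as an extended
nonnegative real (value `+∞` when `f` has `x` as multiple zero), using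
`‖f‖_W² μ̃_norm(f,x)⁻² = (sigmaMin d f x)²`. -/
noncomputable def kappaAt {n : ℕ} (d : Fin n → ℕ)
    (f : Fin n → MvPolynomial (Fin (n + 1)) ℝ) (x : Fin (n + 1) → ℝ) : ℝ≥0∞ :=
  ENNReal.ofReal (bwNormSys f) /
    ENNReal.ofReal (Real.sqrt (sigmaMin d f x ^ 2 + ∑ i, (MvPolynomial.eval x (f i)) ^ 2))

/-- `κ̃(f) = max_{x ∈ Sⁿ} κ̃(f, x)`. -/
noncomputable def kappa {n : ℕ} (d : Fin n → ℕ)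
    (f : Fin n → MvPolynomial (Fin (n + 1)) ℝ) : ℝ≥0∞ :=
  ⨆ x ∈ unitSphere n, kappaAt d f x

namespace BW
open Nat

variable {m : ℕ}

noncomputable def lin (y : Fin m → ℝ) : MvPolynomial (Fin m) ℝ := ∑ k, C (y k) * X k

lemma lin_def (y : Fin m → ℝ) : lin y = ∑ k, C (y k) * X k := rfl

lemma eval_lin (y z : Fin m → ℝ) : eval z (lin y) = ∑ k, y k * z k := by
  simp [lin]

lemma pderiv_lin (k : Fin m) (y : Fin m → ℝ) : pderiv k (lin y) = C (y k) := by
  rw [lin, map_sum]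
  rw [Finset.sum_eq_single k]
  · simp [pderiv_C_mul]
  · intro l _ hl
    simp [pderiv_C_mul, pderiv_X_of_ne hl]
  · simp

lemma lin_isHomogeneous (y : Fin m → ℝ) : (lin y).IsHomogeneous 1 :=
  IsHomogeneous.sum _ _ _ fun k _ => isHomogeneous_C_mul_X _ _

-- sum over univ of j minus single
lemma sum_sub_single {j : Fin m →₀ ℕ} {k : Fin m} (hk : j k ≠ 0) :
    (∑ l : Fin m, (j - Finsupp.single k 1 : Fin m →₀ ℕ) l) + 1 = ∑ l : Fin m, j l := by
  rw [← Finset.sum_erase_add _ _ (Finset.mem_univ k), ← Finset.sum_erase_add _ _ (Finset.mem_univ k)]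
  have h1 : ∀ l ∈ Finset.univ.erase k, (j - Finsupp.single k 1 : Fin m →₀ ℕ) l = j l := by
    intro l hl
    rw [Finsupp.tsub_apply, Finsupp.single_eq_of_ne' (Finset.ne_of_mem_erase hl).symm]
    rfl
  rw [Finset.sum_congr rfl h1, add_assoc]
  congr 1
  rw [Finsupp.tsub_apply, Finsupp.single_eq_same]
  omega

lemma prod_factorial_sub_single {j : Fin m →₀ ℕ} {k : Fin m} (hk : j k ≠ 0) :
    j k * ∏ l : Fin m, ((j - Finsupp.single k 1 : Fin m →₀ ℕ) l)! = ∏ l : Fin m, (j l)! := by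
  rw [← Finset.prod_erase_mul _ _ (Finset.mem_univ k), ← Finset.prod_erase_mul _ _ (Finset.mem_univ k)]
  have h1 : ∀ l ∈ Finset.univ.erase k, ((j - Finsupp.single k 1 : Fin m →₀ ℕ) l)! = (j l)! := by
    intro l hl
    rw [Finsupp.tsub_apply, Finsupp.single_eq_of_ne' (Finset.ne_of_mem_erase hl).symm]
    rfl
  rw [Finset.prod_congr rfl h1, mul_comm (j k), mul_assoc]
  congr 1
  rw [Finsupp.tsub_apply, Finsupp.single_eq_same]
  rw [mul_comm]
  exact Nat.mul_factorial_pred hk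

-- L0
lemma multinomial_sub_single {j : Fin m →₀ ℕ} {k : Fin m} (hk : j k ≠ 0) :
    (∑ l : Fin m, j l) * Nat.multinomial Finset.univ ⇑(j - Finsupp.single k 1 : Fin m →₀ ℕ)
      = j k * Nat.multinomial Finset.univ ⇑j := by
  have A'pos : 0 < ∏ l : Fin m, ((j - Finsupp.single k 1 : Fin m →₀ ℕ) l)! :=
    Finset.prod_pos fun l _ => Nat.factorial_pos _
  apply Nat.eq_of_mul_eq_mul_left A'pos
  have spec' := Nat.multinomial_spec Finset.univ ⇑(j - Finsupp.single k 1 : Fin m →₀ ℕ)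
  have spec := Nat.multinomial_spec Finset.univ ⇑j
  calc (∏ l : Fin m, ((j - Finsupp.single k 1 : Fin m →₀ ℕ) l)!) * ((∑ l : Fin m, j l) * Nat.multinomial Finset.univ ⇑(j - Finsupp.single k 1 : Fin m →₀ ℕ))
      = (∑ l : Fin m, j l) * ((∏ l : Fin m, ((j - Finsupp.single k 1 : Fin m →₀ ℕ) l)!) * Nat.multinomial Finset.univ ⇑(j - Finsupp.single k 1 : Fin m →₀ ℕ)) := by ring
    _ = (∑ l : Fin m, j l) * (∑ l : Fin m, (j - Finsupp.single k 1 : Fin m →₀ ℕ) l)! := by rw [spec']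
    _ = (∑ l : Fin m, j l)! := by
        rw [← sum_sub_single hk]
        exact (Nat.factorial_succ _).symm
    _ = j k * ((∏ l : Fin m, ((j - Finsupp.single k 1 : Fin m →₀ ℕ) l)!) * Nat.multinomial Finset.univ ⇑j) := by
        rw [← mul_assoc, prod_factorial_sub_single hk, spec]
  · ring_nf

-- L1: coefficient of a power of a linear form
lemma coeff_lin_pow (y : Fin m → ℝ) (e : ℕ) (j : Fin m →₀ ℕ) :
    ((lin y) ^ e).coeff j =
      if (∑ l : Fin m, j l) = e then (Nat.multinomial Finset.univ ⇑j : ℝ) * ∏ l : Fin m, y l ^ j l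
      else 0 := by
  induction e generalizing j with
  | zero =>
    rw [pow_zero]
    by_cases hj : j = 0
    · subst hj
      simp [coeff_one, Nat.multinomial]
    · have hs : (∑ l : Fin m, j l) ≠ 0 := by
        intro h
        apply hj
        ext l
        exact Finset.sum_eq_zero_iff.mp h l (Finset.mem_univ l)
      rw [coeff_one, if_neg (fun h => hj h.symm), if_neg hs]
  | succ e ih =>
    rw [pow_succ]
    nth_rewrite 2 [lin_def]
    rw [Finset.mul_sum]
    have hcoeff : ∀ k : Fin m, ((lin y) ^ e * (C (y k) * X k)).coeff j
        = y k * (if k ∈ j.support then ((lin y) ^ e).coeff (j - Finsupp.single k 1) else 0) := by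
      intro k
      have : (lin y) ^ e * (C (y k) * X k) = C (y k) * ((lin y) ^ e * X k) := by ring
      rw [this, coeff_C_mul, coeff_mul_X']
    rw [coeff_sum, Finset.sum_congr rfl fun k _ => hcoeff k]
    by_cases hS : (∑ l : Fin m, j l) = e + 1
    · rw [if_pos hS]
      have hterm : ∀ k ∈ j.support,
          y k * (if k ∈ j.support then ((lin y) ^ e).coeff (j - Finsupp.single k 1) else 0)
          = ((j k : ℝ) / (e+1)) * ((Nat.multinomial Finset.univ ⇑j : ℝ) * ∏ l : Fin m, y l ^ j l) := by
        intro k hk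
        have hk' : j k ≠ 0 := Finsupp.mem_support_iff.mp hk
        have hsum : (∑ l : Fin m, (j - Finsupp.single k 1 : Fin m →₀ ℕ) l) = e := by
          have := sum_sub_single (m := m) (j := j) (k := k) hk'
          omega
        rw [if_pos hk, ih, if_pos hsum]
        have hmult := multinomial_sub_single (m := m) (j := j) (k := k) hk'
        rw [hS] at hmult
        have hmultR : ((e:ℝ)+1) * (Nat.multinomial Finset.univ ⇑(j - Finsupp.single k 1 : Fin m →₀ ℕ) : ℝ)
            = (j k : ℝ) * (Nat.multinomial Finset.univ ⇑j : ℝ) := by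
          exact_mod_cast hmult
        have hprod : y k * ∏ l : Fin m, y l ^ (j - Finsupp.single k 1 : Fin m →₀ ℕ) l
            = ∏ l : Fin m, y l ^ j l := by
          rw [← Finset.prod_erase_mul _ _ (Finset.mem_univ k),
            ← Finset.prod_erase_mul _ _ (Finset.mem_univ k)]
          have h1 : ∀ l ∈ Finset.univ.erase k,
              y l ^ (j - Finsupp.single k 1 : Fin m →₀ ℕ) l = y l ^ j l := by
            intro l hl
            rw [Finsupp.tsub_apply, Finsupp.single_eq_of_ne' (Finset.ne_of_mem_erase hl).symm]
            rfl
          have h2 : (j - Finsupp.single k 1 : Fin m →₀ ℕ) k = j k - 1 := by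
            rw [Finsupp.tsub_apply, Finsupp.single_eq_same]
          have h3 : y k ^ (j k - 1) * y k = y k ^ j k := by
            rw [← pow_succ]
            congr 1
            omega
          rw [Finset.prod_congr rfl h1, h2, ← h3]
          ring
        have hE : ((e:ℝ)+1) ≠ 0 := by positivity
        have hM' : (Nat.multinomial Finset.univ ⇑(j - Finsupp.single k 1 : Fin m →₀ ℕ) : ℝ)
            = (j k : ℝ) * (Nat.multinomial Finset.univ ⇑j : ℝ) / ((e:ℝ)+1) := by
          rw [eq_div_iff hE]
          linarith [hmultR]
        rw [← hprod, hM']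
        ring
      rw [← Finset.sum_subset (Finset.subset_univ j.support) (by
        intro k _ hk
        rw [if_neg hk, mul_zero])]
      rw [Finset.sum_congr rfl hterm, ← Finset.sum_mul]
      have : (∑ k ∈ j.support, (j k : ℝ) / (e+1)) = 1 := by
        rw [← Finset.sum_div]
        have : (∑ k ∈ j.support, (j k : ℝ)) = ((e:ℝ)+1) := by
          have h4 : (∑ k ∈ j.support, j k) = ∑ l : Fin m, j l :=
            Finset.sum_subset (Finset.subset_univ j.support) (by
              intro k _ hk
              exact Finsupp.notMem_support_iff.mp hk)
          exact_mod_cast h4.trans hS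
        rw [this]
        field_simp
      rw [this, one_mul]
    · rw [if_neg hS]
      apply Finset.sum_eq_zero
      intro k _
      by_cases hk : k ∈ j.support
      · rw [if_pos hk, ih]
        have hk' : j k ≠ 0 := Finsupp.mem_support_iff.mp hk
        have := sum_sub_single (m := m) (j := j) (k := k) hk'
        rw [if_neg (by omega)]
        ring
      · rw [if_neg hk, mul_zero]

lemma bwInner_eq_sum_of_subset {p q : MvPolynomial (Fin m) ℝ} {s : Finset (Fin m →₀ ℕ)}
    (hp : p.support ⊆ s) (hq : q.support ⊆ s) :
    bwInner p q = ∑ j ∈ s, (p.coeff j * q.coeff j) / (Nat.multinomial Finset.univ j : ℝ) := by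
  apply Finset.sum_subset (Finset.union_subset hp hq)
  intro j _ hj
  rw [Finset.notMem_union] at hj
  rw [MvPolynomial.notMem_support_iff.mp hj.1, zero_mul, zero_div]

lemma bwInner_eq_sum_left {p q : MvPolynomial (Fin m) ℝ} :
    bwInner p q = ∑ j ∈ p.support, (p.coeff j * q.coeff j) / (Nat.multinomial Finset.univ j : ℝ) := by
  refine (Finset.sum_subset Finset.subset_union_left ?_).symm
  intro j _ hj
  rw [MvPolynomial.notMem_support_iff.mp hj, zero_mul, zero_div]

lemma bwInner_comm (p q : MvPolynomial (Fin m) ℝ) : bwInner p q = bwInner q p := by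
  rw [bwInner, bwInner, Finset.union_comm]
  exact Finset.sum_congr rfl fun j _ => by rw [mul_comm]

lemma bwInner_nonneg (p : MvPolynomial (Fin m) ℝ) : 0 ≤ bwInner p p :=
  Finset.sum_nonneg fun j _ => div_nonneg (mul_self_nonneg _) (Nat.cast_nonneg _)

lemma bwInner_add_left (p q r : MvPolynomial (Fin m) ℝ) :
    bwInner (p + q) r = bwInner p r + bwInner q r := by
  classical
  have h1 : (p + q).support ⊆ p.support ∪ q.support ∪ r.support :=
    (MvPolynomial.support_add).trans Finset.subset_union_left
  have h2 : p.support ⊆ p.support ∪ q.support ∪ r.support :=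
    (Finset.subset_union_left).trans Finset.subset_union_left
  have h3 : q.support ⊆ p.support ∪ q.support ∪ r.support :=
    (Finset.subset_union_right).trans Finset.subset_union_left
  have h4 : r.support ⊆ p.support ∪ q.support ∪ r.support := Finset.subset_union_right
  rw [bwInner_eq_sum_of_subset h1 h4, bwInner_eq_sum_of_subset h2 h4,
    bwInner_eq_sum_of_subset h3 h4, ← Finset.sum_add_distrib]
  exact Finset.sum_congr rfl fun j _ => by rw [coeff_add]; ring

lemma bwInner_smul_left (a : ℝ) (p q : MvPolynomial (Fin m) ℝ) :
    bwInner (a • p) q = a * bwInner p q := by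
  have h1 : (a • p).support ⊆ p.support ∪ q.support :=
    (MvPolynomial.support_smul).trans Finset.subset_union_left
  have h2 : p.support ⊆ p.support ∪ q.support := Finset.subset_union_left
  have h4 : q.support ⊆ p.support ∪ q.support := Finset.subset_union_right
  rw [bwInner_eq_sum_of_subset h1 h4, bwInner_eq_sum_of_subset h2 h4, Finset.mul_sum]
  exact Finset.sum_congr rfl fun j _ => by rw [MvPolynomial.coeff_smul, smul_eq_mul]; ring

lemma bwInner_sub_left (p q r : MvPolynomial (Fin m) ℝ) :
    bwInner (p - q) r = bwInner p r - bwInner q r := by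
  have : p - q = p + (-1 : ℝ) • q := by
    rw [neg_one_smul, sub_eq_add_neg]
  rw [this, bwInner_add_left, bwInner_smul_left]
  ring

lemma bwInner_add_right (p q r : MvPolynomial (Fin m) ℝ) :
    bwInner r (p + q) = bwInner r p + bwInner r q := by
  rw [bwInner_comm, bwInner_add_left, bwInner_comm p r, bwInner_comm q r]

lemma bwInner_smul_right (a : ℝ) (p q : MvPolynomial (Fin m) ℝ) :
    bwInner q (a • p) = a * bwInner q p := by
  rw [bwInner_comm, bwInner_smul_left, bwInner_comm p q]

lemma bwInner_sub_right (p q r : MvPolynomial (Fin m) ℝ) :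
    bwInner r (p - q) = bwInner r p - bwInner r q := by
  rw [bwInner_comm, bwInner_sub_left, bwInner_comm p r, bwInner_comm q r]

lemma sum_univ_of_mem_support {p : MvPolynomial (Fin m) ℝ} {e : ℕ} (hp : p.IsHomogeneous e)
    {j : Fin m →₀ ℕ} (hj : j ∈ p.support) : (∑ l : Fin m, j l) = e := by
  have h := hp (MvPolynomial.mem_support_iff.mp hj)
  rw [show (1 : Fin m → ℕ) = fun _ => 1 from rfl, ← Finsupp.degree_eq_weight_one] at h
  rw [← h, Finsupp.degree]
  exact (Finset.sum_subset (Finset.subset_univ j.support) (fun l _ hl =>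
    Finsupp.notMem_support_iff.mp hl)).symm

lemma multinomial_cast_ne_zero (j : Fin m →₀ ℕ) :
    (Nat.multinomial Finset.univ ⇑j : ℝ) ≠ 0 :=
  Nat.cast_ne_zero.mpr (Nat.multinomial_pos _ _).ne'

-- reproducing property
lemma bwInner_lin_pow {p : MvPolynomial (Fin m) ℝ} {e : ℕ} (hp : p.IsHomogeneous e)
    (y : Fin m → ℝ) : bwInner p ((lin y) ^ e) = eval y p := by
  rw [bwInner_eq_sum_left, eval_eq']
  apply Finset.sum_congr rfl
  intro j hj
  rw [coeff_lin_pow, if_pos (sum_univ_of_mem_support hp hj)]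
  have hM := multinomial_cast_ne_zero j
  field_simp

lemma eval_pderiv (y : Fin m → ℝ) (k : Fin m) (p : MvPolynomial (Fin m) ℝ) :
    eval y (pderiv k p) = ∑ j ∈ p.support,
      p.coeff j * j k * ∏ l : Fin m, y l ^ (j - Finsupp.single k 1 : Fin m →₀ ℕ) l := by
  conv_lhs => rw [p.as_sum]
  rw [map_sum, map_sum]
  apply Finset.sum_congr rfl
  intro j _
  rw [pderiv_monomial, eval_monomial, Finsupp.prod_pow]

-- derivative reproducing property
lemma bwInner_lin_pow_mul_lin {p : MvPolynomial (Fin m) ℝ} {e : ℕ}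
    (hp : p.IsHomogeneous (e + 1)) (y w : Fin m → ℝ) :
    ((e : ℝ) + 1) * bwInner p ((lin y) ^ e * lin w)
      = ∑ k, eval y (pderiv k p) * w k := by
  have hswap : (∑ k, eval y (pderiv k p) * w k)
      = ∑ j ∈ p.support, ∑ k : Fin m,
          p.coeff j * j k * (∏ l : Fin m, y l ^ (j - Finsupp.single k 1 : Fin m →₀ ℕ) l) * w k := by
    rw [Finset.sum_congr rfl fun k (_ : k ∈ Finset.univ) => by rw [eval_pderiv, Finset.sum_mul]]
    rw [Finset.sum_comm]
  rw [hswap, bwInner_eq_sum_left, Finset.mul_sum]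
  apply Finset.sum_congr rfl
  intro j hj
  have hd : (∑ l : Fin m, j l) = e + 1 := sum_univ_of_mem_support hp hj
  have hM := multinomial_cast_ne_zero j
  have hE : ((e:ℝ)+1) ≠ 0 := by positivity
  have hQ : ((lin y) ^ e * lin w).coeff j
      = ∑ k, w k * ((j k : ℝ) * (Nat.multinomial Finset.univ ⇑j : ℝ) / ((e:ℝ)+1)
          * ∏ l : Fin m, y l ^ (j - Finsupp.single k 1 : Fin m →₀ ℕ) l) := by
    nth_rewrite 2 [lin_def]
    rw [Finset.mul_sum, coeff_sum]
    apply Finset.sum_congr rfl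
    intro k _
    have hre : (lin y) ^ e * (C (w k) * X k) = C (w k) * ((lin y) ^ e * X k) := by ring
    rw [hre, coeff_C_mul, coeff_mul_X']
    by_cases hk : k ∈ j.support
    · rw [if_pos hk]
      have hk' : j k ≠ 0 := Finsupp.mem_support_iff.mp hk
      have hsum : (∑ l : Fin m, (j - Finsupp.single k 1 : Fin m →₀ ℕ) l) = e := by
        have := sum_sub_single (m := m) (j := j) (k := k) hk'
        omega
      rw [coeff_lin_pow, if_pos hsum]
      have hmult := multinomial_sub_single (m := m) (j := j) (k := k) hk'
      rw [hd] at hmult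
      have hmultR : ((e:ℝ)+1) * (Nat.multinomial Finset.univ ⇑(j - Finsupp.single k 1 : Fin m →₀ ℕ) : ℝ)
          = (j k : ℝ) * (Nat.multinomial Finset.univ ⇑j : ℝ) := by
        exact_mod_cast hmult
      have hM' : (Nat.multinomial Finset.univ ⇑(j - Finsupp.single k 1 : Fin m →₀ ℕ) : ℝ)
          = (j k : ℝ) * (Nat.multinomial Finset.univ ⇑j : ℝ) / ((e:ℝ)+1) := by
        rw [eq_div_iff hE]
        linarith [hmultR]
      rw [hM']
    · rw [if_neg hk]
      have hk0 : j k = 0 := Finsupp.notMem_support_iff.mp hk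
      rw [hk0]
      push_cast
      ring
  rw [hQ, Finset.mul_sum, Finset.sum_div, Finset.mul_sum]
  apply Finset.sum_congr rfl
  intro k _
  field_simp

section Geometry

variable {x v : Fin m → ℝ} {d : ℕ}

lemma eval_lin_pow (y z : Fin m → ℝ) (e : ℕ) :
    eval z ((lin y) ^ e) = (∑ k, y k * z k) ^ e := by
  rw [map_pow, eval_lin]

lemma Pp_isHomogeneous (y : Fin m → ℝ) (e : ℕ) : ((lin y) ^ e).IsHomogeneous e := by
  simpa using (lin_isHomogeneous y).pow e

lemma Qq_isHomogeneous (hd : 1 ≤ d) : ((lin x) ^ (d - 1) * lin v).IsHomogeneous d := by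
  have h := (Pp_isHomogeneous x (d-1)).mul (lin_isHomogeneous v)
  have he : d - 1 + 1 = d := Nat.succ_pred_eq_of_pos hd
  rwa [he] at h

lemma sum_mul_self (hx : ∑ k, x k ^ 2 = 1) : (∑ k, x k * x k) = 1 := by
  rw [← hx]; exact Finset.sum_congr rfl fun k _ => (sq (x k)).symm

lemma eval_Pp (hx : ∑ k, x k ^ 2 = 1) : eval x ((lin x) ^ d) = 1 := by
  rw [eval_lin_pow, sum_mul_self hx, one_pow]

lemma eval_Qq (hvx : ∑ k, v k * x k = 0) :
    eval x ((lin x) ^ (d - 1) * lin v) = 0 := by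
  rw [map_mul, eval_lin, hvx, mul_zero]

lemma deriv_Pp (hx : ∑ k, x k ^ 2 = 1) (hvx : ∑ k, v k * x k = 0) :
    ∑ k, eval x (pderiv k ((lin x) ^ d)) * v k = 0 := by
  have h : ∀ k : Fin m, eval x (pderiv k ((lin x) ^ d)) = (d : ℝ) * x k := by
    intro k
    rw [pderiv_pow, pderiv_lin, map_mul, map_mul, eval_C, eval_lin_pow, sum_mul_self hx,
      one_pow, map_natCast]
    ring
  rw [Finset.sum_congr rfl fun k _ => by rw [h k]]
  have h2 : ∑ k, (d:ℝ) * x k * v k = (d:ℝ) * ∑ k, v k * x k := by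
    rw [Finset.mul_sum]
    exact Finset.sum_congr rfl fun k _ => by ring
  rw [h2, hvx, mul_zero]

lemma deriv_Qq (hx : ∑ k, x k ^ 2 = 1) (hv : ∑ k, v k ^ 2 = 1)
    (hvx : ∑ k, v k * x k = 0) :
    ∑ k, eval x (pderiv k ((lin x) ^ (d - 1) * lin v)) * v k = 1 := by
  have h : ∀ k : Fin m, eval x (pderiv k ((lin x) ^ (d - 1) * lin v)) = v k := by
    intro k
    rw [pderiv_mul, map_add, map_mul, map_mul, pderiv_lin, eval_C, eval_lin, hvx, mul_zero,
      zero_add, eval_lin_pow, sum_mul_self hx, one_pow, one_mul]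
  rw [Finset.sum_congr rfl fun k _ => by rw [h k]]
  exact sum_mul_self hv

-- inner products against P and Q
lemma bwInner_Pp {h : MvPolynomial (Fin m) ℝ} (hh : h.IsHomogeneous d) :
    bwInner h ((lin x) ^ d) = eval x h :=
  bwInner_lin_pow hh x

lemma bwInner_Qq (hd : 1 ≤ d) {h : MvPolynomial (Fin m) ℝ} (hh : h.IsHomogeneous d) :
    bwInner h ((lin x) ^ (d - 1) * lin v)
      = (∑ k, eval x (pderiv k h) * v k) / (d : ℝ) := by
  have he : d - 1 + 1 = d := Nat.succ_pred_eq_of_pos hd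
  have hh' : h.IsHomogeneous ((d-1) + 1) := by rwa [he]
  have hD := bwInner_lin_pow_mul_lin hh' x v
  have hcast : (((d-1 : ℕ)) : ℝ) + 1 = (d : ℝ) := by
    have : ((d - 1 + 1 : ℕ) : ℝ) = (d : ℝ) := by rw [he]
    push_cast at this
    linarith
  rw [hcast] at hD
  have hd0 : (d : ℝ) ≠ 0 := by positivity
  rw [eq_div_iff hd0]
  linarith [hD]

-- the two key quantities of a homogeneous polynomial
lemma key_ineq (hd : 1 ≤ d) (hx : ∑ k, x k ^ 2 = 1) (hv : ∑ k, v k ^ 2 = 1)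
    (hvx : ∑ k, v k * x k = 0) {h : MvPolynomial (Fin m) ℝ} (hh : h.IsHomogeneous d) :
    (eval x h) ^ 2 + (∑ k, eval x (pderiv k h) * v k) ^ 2 / (d : ℝ) ≤ bwInner h h := by
  set P : MvPolynomial (Fin m) ℝ := (lin x) ^ d with hP
  set Q : MvPolynomial (Fin m) ℝ := (lin x) ^ (d - 1) * lin v with hQ
  set α := eval x h with hα
  set β := ∑ k, eval x (pderiv k h) * v k with hβ
  have hd0 : (0:ℝ) < (d : ℝ) := by positivity
  have hPhom : P.IsHomogeneous d := Pp_isHomogeneous x d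
  have hQhom : Q.IsHomogeneous d := Qq_isHomogeneous hd
  have hPP : bwInner P P = 1 := by rw [bwInner_Pp hPhom, eval_Pp hx]
  have hPQ : bwInner P Q = 0 := by
    rw [bwInner_Qq hd hPhom, deriv_Pp hx hvx, zero_div]
  have hQP : bwInner Q P = 0 := by rw [bwInner_comm]; exact hPQ
  have hQQ : bwInner Q Q = 1 / (d:ℝ) := by
    rw [bwInner_Qq hd hQhom, deriv_Qq hx hv hvx]
  have hhP : bwInner h P = α := bwInner_Pp hh
  have hhQ : bwInner h Q = β / (d:ℝ) := bwInner_Qq hd hh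
  have hexp : bwInner (h - (α • P + β • Q)) (h - (α • P + β • Q))
      = bwInner h h - α ^ 2 - β ^ 2 / (d:ℝ) := by
    simp only [bwInner_sub_left, bwInner_sub_right, bwInner_add_left, bwInner_add_right,
      bwInner_smul_left, bwInner_smul_right]
    rw [bwInner_comm P h, bwInner_comm Q h]
    rw [hPP, hPQ, hQP, hQQ, hhP, hhQ]
    field_simp
    ring
  have hnn := bwInner_nonneg (h - (α • P + β • Q))
  rw [hexp] at hnn
  linarith

lemma key_eq (hd : 1 ≤ d) (hx : ∑ k, x k ^ 2 = 1) (hv : ∑ k, v k ^ 2 = 1)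
    (hvx : ∑ k, v k * x k = 0) (a b : ℝ) :
    bwInner (a • ((lin x) ^ d) + b • ((lin x) ^ (d - 1) * lin v))
        (a • ((lin x) ^ d) + b • ((lin x) ^ (d - 1) * lin v))
      = a ^ 2 + b ^ 2 / (d : ℝ) := by
  set P : MvPolynomial (Fin m) ℝ := (lin x) ^ d with hP
  set Q : MvPolynomial (Fin m) ℝ := (lin x) ^ (d - 1) * lin v with hQ
  have hPhom : P.IsHomogeneous d := Pp_isHomogeneous x d
  have hQhom : Q.IsHomogeneous d := Qq_isHomogeneous hd
  have hPP : bwInner P P = 1 := by rw [bwInner_Pp hPhom, eval_Pp hx]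
  have hPQ : bwInner P Q = 0 := by
    rw [bwInner_Qq hd hPhom, deriv_Pp hx hvx, zero_div]
  have hQP : bwInner Q P = 0 := by rw [bwInner_comm]; exact hPQ
  have hQQ : bwInner Q Q = 1 / (d:ℝ) := by
    rw [bwInner_Qq hd hQhom, deriv_Qq hx hv hvx]
  simp only [bwInner_add_left, bwInner_add_right, bwInner_smul_left, bwInner_smul_right]
  rw [hPP, hPQ, hQP, hQQ]
  have hd0 : (d:ℝ) ≠ 0 := by positivity
  field_simp
  ring

lemma eval_comb (hx : ∑ k, x k ^ 2 = 1) (hvx : ∑ k, v k * x k = 0) (a b : ℝ) :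
    eval x (a • ((lin x) ^ d) + b • ((lin x) ^ (d - 1) * lin v)) = a := by
  rw [map_add, smul_eq_C_mul, smul_eq_C_mul, map_mul, map_mul, eval_C, eval_C,
    eval_Pp hx, eval_Qq hvx, mul_one, mul_zero, add_zero]

lemma deriv_comb (hx : ∑ k, x k ^ 2 = 1) (hv : ∑ k, v k ^ 2 = 1)
    (hvx : ∑ k, v k * x k = 0) (a b : ℝ) :
    ∑ k, eval x (pderiv k (a • ((lin x) ^ d) + b • ((lin x) ^ (d - 1) * lin v))) * v k
      = b := by
  have h : ∀ k : Fin m, eval x (pderiv k (a • ((lin x) ^ d) + b • ((lin x) ^ (d - 1) * lin v)))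
      = a * eval x (pderiv k ((lin x) ^ d))
        + b * eval x (pderiv k ((lin x) ^ (d - 1) * lin v)) := by
    intro k
    rw [map_add, smul_eq_C_mul, smul_eq_C_mul, pderiv_C_mul, pderiv_C_mul,
      map_add, map_mul, map_mul, eval_C, eval_C]
  have h2 : ∀ k : Fin m, eval x (pderiv k (a • ((lin x) ^ d) + b • ((lin x) ^ (d - 1) * lin v))) * v k
      = a * (eval x (pderiv k ((lin x) ^ d)) * v k)
        + b * (eval x (pderiv k ((lin x) ^ (d - 1) * lin v)) * v k) := by
    intro k
    rw [h k]
    ring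
  rw [Finset.sum_congr rfl fun k _ => h2 k, Finset.sum_add_distrib, ← Finset.mul_sum,
    ← Finset.mul_sum, deriv_Pp hx hvx, deriv_Qq hx hv hvx, mul_zero, mul_one, zero_add]

lemma sum_scale (Cc : ℝ) (u w : Fin m → ℝ) :
    ∑ k, (Cc * u k) * w k = Cc * ∑ k, u k * w k := by
  rw [Finset.mul_sum]
  exact Finset.sum_congr rfl fun k _ => by ring

lemma sum_scale' (Cc : ℝ) (A u : Fin m → ℝ) :
    ∑ k, A k * (Cc * u k) = Cc * ∑ k, A k * u k := by
  rw [Finset.mul_sum]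
  exact Finset.sum_congr rfl fun k _ => by ring

lemma sum_scale_sq (Cc : ℝ) (u : Fin m → ℝ) :
    ∑ k, (Cc * u k) ^ 2 = Cc ^ 2 * ∑ k, u k ^ 2 := by
  rw [Finset.mul_sum]
  exact Finset.sum_congr rfl fun k _ => by ring

lemma sum_sq_pos_of_ne_zero {u : Fin m → ℝ} (hu : u ≠ 0) : 0 < ∑ k, u k ^ 2 := by
  obtain ⟨k, hk⟩ := Function.ne_iff.mp hu
  have hk' : u k ≠ 0 := hk
  have h1 : 0 < u k ^ 2 := by rw [sq]; exact mul_self_pos.mpr hk'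
  exact lt_of_lt_of_le h1 (Finset.single_le_sum (fun l _ => sq_nonneg (u l)) (Finset.mem_univ k))

lemma normalize_unit {w : Fin m → ℝ} (hw : w ≠ 0) :
    ∑ k, ((Real.sqrt (∑ l, w l ^ 2))⁻¹ * w k) ^ 2 = 1 := by
  have hS := sum_sq_pos_of_ne_zero hw
  rw [sum_scale_sq, inv_pow, Real.sq_sqrt hS.le]
  exact inv_mul_cancel₀ hS.ne'

lemma exists_unit_tangent (hm : 2 ≤ m) {x : Fin m → ℝ} (hx : ∑ k, x k ^ 2 = 1) :
    ∃ v : Fin m → ℝ, (∑ k, v k * x k = 0) ∧ ∑ k, v k ^ 2 = 1 := by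
  set i0 : Fin m := ⟨0, by omega⟩ with hi0
  set i1 : Fin m := ⟨1, by omega⟩ with hi1
  have hne01 : i0 ≠ i1 := by
    intro h
    have := congrArg Fin.val h
    simp [hi0, hi1] at this
  set u : Fin m → Fin m → ℝ := fun j k => (if k = j then (1:ℝ) else 0) - x j * x k with hu
  have horth : ∀ j : Fin m, ∑ k, u j k * x k = 0 := by
    intro j
    have h1 : ∀ k : Fin m, u j k * x k
        = (if k = j then x k else 0) - x j * (x k * x k) := by
      intro k
      show ((if k = j then (1:ℝ) else 0) - x j * x k) * x k = _
      by_cases hkj : k = j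
      · rw [if_pos hkj, if_pos hkj]; ring
      · rw [if_neg hkj, if_neg hkj]; ring
    rw [Finset.sum_congr rfl fun k _ => h1 k, Finset.sum_sub_distrib,
      Finset.sum_ite_eq' Finset.univ j (fun k => x k), ← Finset.mul_sum, sum_mul_self hx,
      if_pos (Finset.mem_univ j), mul_one, sub_self]
  have hne : u i0 ≠ 0 ∨ u i1 ≠ 0 := by
    by_contra hcon
    push_neg at hcon
    obtain ⟨h0, h1⟩ := hcon
    have e0 := congrFun h0 i0
    have e1 := congrFun h1 i1
    simp [hu] at e0 e1
    have hsum_ge : x i0 ^ 2 + x i1 ^ 2 ≤ ∑ k, x k ^ 2 := by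
      have hsub := Finset.sum_le_sum_of_subset_of_nonneg
        (Finset.subset_univ ({i0, i1} : Finset (Fin m))) (fun k _ _ => sq_nonneg (x k))
      rwa [Finset.sum_pair hne01] at hsub
    rw [hx] at hsum_ge
    nlinarith [e0, e1]
  have hex : ∃ w : Fin m → ℝ, w ≠ 0 ∧ ∑ k, w k * x k = 0 := by
    rcases hne with hu0 | hu1
    · exact ⟨u i0, hu0, horth i0⟩
    · exact ⟨u i1, hu1, horth i1⟩
  obtain ⟨w, hw0, hwx⟩ := hex
  refine ⟨fun k => (Real.sqrt (∑ l, w l ^ 2))⁻¹ * w k, ?_, normalize_unit hw0⟩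
  rw [sum_scale, hwx, mul_zero]

end Geometry

end BW

/-- For every `x ∈ Sⁿ` and every `f ∈ H_d` with `‖f‖_W = 1`,
`κ̃(f, x) = 1 / dist(f, Σ_ℝ(x))`. -/
theorem kappaAt_eq_inv_dist_sigmaRx {n : ℕ} (hn : 1 ≤ n) (d : Fin n → ℕ)
    (hd : ∀ i, 1 ≤ d i) (x : Fin (n + 1) → ℝ) (hx : x ∈ unitSphere n)
    (f : Fin n → MvPolynomial (Fin (n + 1)) ℝ) (hf : IsSystem d f)
    (hf1 : bwNormSys f = 1) :
    kappaAt d f x = 1 / ENNReal.ofReal (bwDist f (SigmaRx d x)) := by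
  have hxs : ∑ k, x k ^ 2 = 1 := hx
  set c := ∑ i, (MvPolynomial.eval x (f i)) ^ 2 with hc
  set T : Set (Fin (n+1) → ℝ) := {v | (∑ k, v k * x k = 0) ∧ ∑ k, v k ^ 2 = 1} with hT
  set σf : (Fin (n+1) → ℝ) → ℝ := fun v => Real.sqrt (∑ i,
      ((∑ k, MvPolynomial.eval x (MvPolynomial.pderiv k (f i)) * v k) / Real.sqrt (d i)) ^ 2)
    with hσf
  have hs_def : sigmaMin d f x = sInf (σf '' T) := rfl
  set s := sigmaMin d f x with hs
  set B2 : (Fin (n+1) → ℝ) → ℝ := fun v => ∑ i,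
      (∑ k, MvPolynomial.eval x (MvPolynomial.pderiv k (f i)) * v k) ^ 2 / (d i : ℝ) with hB2
  have hσsq : ∀ v, σf v ^ 2 = B2 v := by
    intro v
    rw [hσf, hB2]
    have h1 : (0:ℝ) ≤ ∑ i, ((∑ k, MvPolynomial.eval x (MvPolynomial.pderiv k (f i)) * v k)
        / Real.sqrt (d i)) ^ 2 := Finset.sum_nonneg fun i _ => sq_nonneg _
    rw [Real.sq_sqrt h1]
    apply Finset.sum_congr rfl
    intro i _
    rw [div_pow, Real.sq_sqrt (Nat.cast_nonneg _)]
  have hB2nonneg : ∀ v, 0 ≤ B2 v := fun v =>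
    Finset.sum_nonneg fun i _ => div_nonneg (sq_nonneg _) (Nat.cast_nonneg _)
  have hc0 : 0 ≤ c := Finset.sum_nonneg fun i _ => sq_nonneg _
  have hT_ne : T.Nonempty := by
    obtain ⟨v, h1, h2⟩ := BW.exists_unit_tangent (by omega) hxs
    exact ⟨v, h1, h2⟩
  have hsBdd : BddBelow (σf '' T) := by
    refine ⟨0, fun t ht => ?_⟩
    obtain ⟨w, _, rfl⟩ := ht
    exact Real.sqrt_nonneg _
  have hs0 : 0 ≤ s := by
    rw [hs_def]
    apply Real.sInf_nonneg
    intro t ht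
    obtain ⟨w, _, rfl⟩ := ht
    exact Real.sqrt_nonneg _
  -- Claim A : explicit minimal perturbation for each unit tangent vector v
  have claimA : ∀ v ∈ T, ∃ g ∈ SigmaRx d x,
      bwNormSys (f - g) = Real.sqrt (c + B2 v) := by
    intro v hvT
    obtain ⟨hvx, hv1⟩ := hvT
    set g : Fin n → MvPolynomial (Fin (n+1)) ℝ := fun i =>
      f i - ((MvPolynomial.eval x (f i)) • ((BW.lin x) ^ (d i))
        + (∑ k, MvPolynomial.eval x (MvPolynomial.pderiv k (f i)) * v k) •
            ((BW.lin x) ^ (d i - 1) * BW.lin v)) with hg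
    have hfg : ∀ i, (f - g) i = (MvPolynomial.eval x (f i)) • ((BW.lin x) ^ (d i))
        + (∑ k, MvPolynomial.eval x (MvPolynomial.pderiv k (f i)) * v k) •
            ((BW.lin x) ^ (d i - 1) * BW.lin v) := by
      intro i
      show f i - g i = _
      rw [hg]
      exact sub_sub_cancel _ _
    have hvne : v ≠ 0 := by
      intro h0
      rw [h0] at hv1
      simp at hv1
    refine ⟨g, ⟨?_, ?_, ?_⟩, ?_⟩
    · intro i
      apply (hf i).sub
      have h1 : ((MvPolynomial.eval x (f i)) • ((BW.lin x) ^ (d i))).IsHomogeneous (d i) := by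
        rw [smul_eq_C_mul]
        exact (BW.Pp_isHomogeneous x (d i)).C_mul _
      have h2 : ((∑ k, MvPolynomial.eval x (MvPolynomial.pderiv k (f i)) * v k) •
          ((BW.lin x) ^ (d i - 1) * BW.lin v)).IsHomogeneous (d i) := by
        rw [smul_eq_C_mul]
        exact (BW.Qq_isHomogeneous (hd i)).C_mul _
      exact h1.add h2
    · intro i
      rw [hg]
      show MvPolynomial.eval x (f i - _) = 0
      rw [map_sub, BW.eval_comb hxs hvx, sub_self]
    · refine ⟨v, hvne, hvx, ?_⟩
      intro i
      have hsub : ∀ k, MvPolynomial.eval x (MvPolynomial.pderiv k (g i)) * v k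
          = MvPolynomial.eval x (MvPolynomial.pderiv k (f i)) * v k
            - MvPolynomial.eval x (MvPolynomial.pderiv k
                ((MvPolynomial.eval x (f i)) • ((BW.lin x) ^ (d i))
                  + (∑ l, MvPolynomial.eval x (MvPolynomial.pderiv l (f i)) * v l) •
                      ((BW.lin x) ^ (d i - 1) * BW.lin v))) * v k := by
        intro k
        rw [hg]
        show MvPolynomial.eval x (MvPolynomial.pderiv k (f i - _)) * v k = _
        rw [map_sub, map_sub, sub_mul]
      rw [Finset.sum_congr rfl fun k _ => hsub k, Finset.sum_sub_distrib,
        BW.deriv_comb hxs hv1 hvx, sub_self]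
    · rw [bwNormSys]
      congr 1
      rw [Finset.sum_congr rfl fun i _ => by
        rw [hfg i, BW.key_eq (hd i) hxs hv1 hvx]]
      rw [Finset.sum_add_distrib]
  -- Claim B : lower bound for any g in Σ(x)
  have claimB : ∀ g ∈ SigmaRx d x,
      c + s ^ 2 ≤ ∑ i, bwInner ((f - g) i) ((f - g) i) := by
    intro g hgmem
    obtain ⟨hgsys, hgzero, u, hu0, hux, husing⟩ := hgmem
    set C0 : ℝ := (Real.sqrt (∑ l, u l ^ 2))⁻¹ with hC0
    set v : Fin (n+1) → ℝ := fun k => C0 * u k with hvdef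
    have hvx : ∑ k, v k * x k = 0 := by
      rw [hvdef]
      show ∑ k, (C0 * u k) * x k = 0
      rw [BW.sum_scale, hux, mul_zero]
    have hv1 : ∑ k, v k ^ 2 = 1 := BW.normalize_unit hu0
    have hvT : v ∈ T := ⟨hvx, hv1⟩
    have hsing_v : ∀ i, ∑ k, MvPolynomial.eval x (MvPolynomial.pderiv k (g i)) * v k = 0 := by
      intro i
      show ∑ k, MvPolynomial.eval x (MvPolynomial.pderiv k (g i)) * (C0 * u k) = 0
      rw [BW.sum_scale', husing i, mul_zero]
    have hineq : ∀ i, (MvPolynomial.eval x (f i)) ^ 2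
        + (∑ k, MvPolynomial.eval x (MvPolynomial.pderiv k (f i)) * v k) ^ 2 / (d i : ℝ)
        ≤ bwInner ((f - g) i) ((f - g) i) := by
      intro i
      have hhom : ((f - g) i).IsHomogeneous (d i) := by
        show (f i - g i).IsHomogeneous (d i)
        exact (hf i).sub (hgsys i)
      have heval : MvPolynomial.eval x ((f - g) i) = MvPolynomial.eval x (f i) := by
        show MvPolynomial.eval x (f i - g i) = _
        rw [map_sub, hgzero i, sub_zero]
      have hderiv : ∑ k, MvPolynomial.eval x (MvPolynomial.pderiv k ((f - g) i)) * v k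
          = ∑ k, MvPolynomial.eval x (MvPolynomial.pderiv k (f i)) * v k := by
        have hsub : ∀ k, MvPolynomial.eval x (MvPolynomial.pderiv k ((f - g) i)) * v k
            = MvPolynomial.eval x (MvPolynomial.pderiv k (f i)) * v k
              - MvPolynomial.eval x (MvPolynomial.pderiv k (g i)) * v k := by
          intro k
          show MvPolynomial.eval x (MvPolynomial.pderiv k (f i - g i)) * v k = _
          rw [map_sub, map_sub, sub_mul]
        rw [Finset.sum_congr rfl fun k _ => hsub k, Finset.sum_sub_distrib, hsing_v i, sub_zero]
      have hk := BW.key_ineq (hd i) hxs hv1 hvx hhom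
      rw [heval, hderiv] at hk
      exact hk
    have hsum : c + B2 v ≤ ∑ i, bwInner ((f - g) i) ((f - g) i) := by
      have hle := Finset.sum_le_sum fun i (_ : i ∈ Finset.univ) => hineq i
      rwa [Finset.sum_add_distrib] at hle
    have hsle : s ≤ σf v := by
      rw [hs_def]
      exact csInf_le hsBdd ⟨v, hvT, rfl⟩
    have hs2 : s ^ 2 ≤ B2 v := by
      rw [← hσsq v]
      exact pow_le_pow_left₀ hs0 hsle 2
    linarith
  -- the distance
  set DS := (fun g => bwNormSys (f - g)) '' SigmaRx d x with hDS
  have hD_def : bwDist f (SigmaRx d x) = sInf DS := rfl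
  have hDS_ne : DS.Nonempty := by
    obtain ⟨v0, hv0⟩ := hT_ne
    obtain ⟨g, hg, _⟩ := claimA v0 hv0
    exact ⟨bwNormSys (f - g), g, hg, rfl⟩
  have hDS_bdd : BddBelow DS := by
    refine ⟨0, fun y hy => ?_⟩
    obtain ⟨g, _, rfl⟩ := hy
    exact Real.sqrt_nonneg _
  set D := bwDist f (SigmaRx d x) with hDdef
  have hD0 : 0 ≤ D := by
    rw [hD_def]
    apply Real.sInf_nonneg
    intro y hy
    obtain ⟨g, _, rfl⟩ := hy
    exact Real.sqrt_nonneg _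
  have hlow : Real.sqrt (c + s ^ 2) ≤ D := by
    rw [hD_def]
    apply le_csInf hDS_ne
    intro y hy
    obtain ⟨g, hg, rfl⟩ := hy
    exact Real.sqrt_le_sqrt (claimB g hg)
  have hupp : ∀ v ∈ T, D ≤ Real.sqrt (c + B2 v) := by
    intro v hv
    obtain ⟨g, hg, hnorm⟩ := claimA v hv
    rw [← hnorm, hD_def]
    exact csInf_le hDS_bdd ⟨g, hg, rfl⟩
  have hD2 : D ^ 2 ≤ c + s ^ 2 := by
    by_cases hcase : D ^ 2 ≤ c
    · nlinarith [sq_nonneg s]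
    · push_neg at hcase
      have hls : Real.sqrt (D ^ 2 - c) ≤ s := by
        rw [hs_def]
        apply le_csInf (hT_ne.image σf)
        intro t ht
        obtain ⟨v, hvT, rfl⟩ := ht
        have h1 : D ≤ Real.sqrt (c + B2 v) := hupp v hvT
        have h2 : D ^ 2 ≤ c + B2 v := by
          calc D ^ 2 ≤ (Real.sqrt (c + B2 v)) ^ 2 := pow_le_pow_left₀ hD0 h1 2
          _ = c + B2 v := Real.sq_sqrt (by linarith [hB2nonneg v])
        have h3 : D ^ 2 - c ≤ (σf v) ^ 2 := by
          rw [hσsq v]; linarith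
        calc Real.sqrt (D ^ 2 - c) ≤ Real.sqrt ((σf v) ^ 2) := Real.sqrt_le_sqrt h3
        _ = σf v := Real.sqrt_sq (Real.sqrt_nonneg _)
      have h4 : D ^ 2 - c ≤ s ^ 2 := by
        have h5 := pow_le_pow_left₀ (Real.sqrt_nonneg _) hls 2
        rwa [Real.sq_sqrt (by linarith)] at h5
      linarith
  have hDeq : D = Real.sqrt (c + s ^ 2) := by
    refine le_antisymm ?_ hlow
    calc D = Real.sqrt (D ^ 2) := (Real.sqrt_sq hD0).symm
    _ ≤ Real.sqrt (c + s ^ 2) := Real.sqrt_le_sqrt hD2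
  have hfinal : Real.sqrt (sigmaMin d f x ^ 2 + ∑ i, (MvPolynomial.eval x (f i)) ^ 2)
      = Real.sqrt (c + s ^ 2) := by
    rw [← hs, ← hc, add_comm]
  show kappaAt d f x = 1 / ENNReal.ofReal D
  rw [hDeq]
  unfold kappaAt
  rw [hf1, ENNReal.ofReal_one, hfinal]
end

section
/- For every x ∈ S^n, every f ∈ H_d with ‖f‖_W = 1, and every g ∈ Σ_ℝ(x), one has ‖f − g‖_W ≥ κ̃(f,x)^{-1}. -/
open MvPolynomial Finset ENNReal

/-! ### Auxiliary development for the proof -/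

namespace BWAux

variable {m : ℕ}

lemma bwInner_eq_sum {p q : MvPolynomial (Fin m) ℝ} {s : Finset (Fin m →₀ ℕ)}
    (hs : p.support ∪ q.support ⊆ s) :
    bwInner p q = ∑ j ∈ s, (p.coeff j * q.coeff j) / (Nat.multinomial Finset.univ j : ℝ) := by
  refine Finset.sum_subset hs fun j _ hj => ?_
  rcases Finset.notMem_union.mp hj with ⟨h1, _⟩
  rw [MvPolynomial.notMem_support_iff.mp h1, zero_mul, zero_div]

lemma bwInner_comm (p q : MvPolynomial (Fin m) ℝ) : bwInner p q = bwInner q p := by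
  unfold bwInner
  rw [Finset.union_comm]
  exact Finset.sum_congr rfl fun j _ => by ring

lemma bwInner_add_left (p q r : MvPolynomial (Fin m) ℝ) :
    bwInner (p + q) r = bwInner p r + bwInner q r := by
  set s := (p.support ∪ q.support ∪ (p + q).support) ∪ r.support with hsdef
  have h1 : (p + q).support ∪ r.support ⊆ s := by
    apply Finset.union_subset_union_left
    intro j hj; exact Finset.mem_union_right _ hj
  have h2 : p.support ∪ r.support ⊆ s := by
    apply Finset.union_subset_union_left
    intro j hj
    exact Finset.mem_union_left _ (Finset.mem_union_left _ hj)
  have h3 : q.support ∪ r.support ⊆ s := by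
    apply Finset.union_subset_union_left
    intro j hj
    exact Finset.mem_union_left _ (Finset.mem_union_right _ hj)
  rw [bwInner_eq_sum h1, bwInner_eq_sum h2, bwInner_eq_sum h3, ← Finset.sum_add_distrib]
  refine Finset.sum_congr rfl fun j _ => ?_
  rw [MvPolynomial.coeff_add]
  ring

lemma bwInner_smul_left (c : ℝ) (p q : MvPolynomial (Fin m) ℝ) :
    bwInner (c • p) q = c * bwInner p q := by
  have h1 : (c • p).support ∪ q.support ⊆ p.support ∪ q.support :=
    Finset.union_subset_union_left (MvPolynomial.support_smul)
  rw [bwInner_eq_sum h1, bwInner_eq_sum (subset_refl _), Finset.mul_sum]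
  refine Finset.sum_congr rfl fun j _ => ?_
  rw [MvPolynomial.coeff_smul]
  simp [smul_eq_mul]
  ring

lemma bwInner_sub_left (p q r : MvPolynomial (Fin m) ℝ) :
    bwInner (p - q) r = bwInner p r - bwInner q r := by
  have : p - q = p + (-1 : ℝ) • q := by
    rw [neg_one_smul]; ring
  rw [this, bwInner_add_left, bwInner_smul_left]
  ring

lemma bwInner_add_right (p q r : MvPolynomial (Fin m) ℝ) :
    bwInner p (q + r) = bwInner p q + bwInner p r := by
  rw [bwInner_comm, bwInner_add_left, bwInner_comm q p, bwInner_comm r p]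

lemma bwInner_smul_right (c : ℝ) (p q : MvPolynomial (Fin m) ℝ) :
    bwInner p (c • q) = c * bwInner p q := by
  rw [bwInner_comm, bwInner_smul_left, bwInner_comm q p]

lemma bwInner_sub_right (p q r : MvPolynomial (Fin m) ℝ) :
    bwInner p (q - r) = bwInner p q - bwInner p r := by
  rw [bwInner_comm, bwInner_sub_left, bwInner_comm q p, bwInner_comm r p]

lemma bwInner_self_nonneg (p : MvPolynomial (Fin m) ℝ) : 0 ≤ bwInner p p := by
  refine Finset.sum_nonneg fun j _ => div_nonneg (mul_self_nonneg _) (Nat.cast_nonneg _)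

lemma bwInner_sum_left {ι : Type*} (t : Finset ι) (F : ι → MvPolynomial (Fin m) ℝ)
    (q : MvPolynomial (Fin m) ℝ) :
    bwInner (∑ i ∈ t, F i) q = ∑ i ∈ t, bwInner (F i) q := by
  classical
  induction t using Finset.induction_on with
  | empty =>
    simp only [Finset.sum_empty]
    have : (0 : MvPolynomial (Fin m) ℝ) = (0 : ℝ) • 0 := by simp
    rw [this, bwInner_smul_left, zero_mul]
  | insert _ _ h ih =>
    rw [Finset.sum_insert h, Finset.sum_insert h, bwInner_add_left, ih]

lemma bwInner_monomial_left (j : Fin m →₀ ℕ) (c : ℝ) (q : MvPolynomial (Fin m) ℝ) :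
    bwInner (MvPolynomial.monomial j c) q
      = c * q.coeff j / (Nat.multinomial Finset.univ j : ℝ) := by
  classical
  have hs : (MvPolynomial.monomial j c).support ∪ q.support ⊆ insert j q.support := by
    refine Finset.union_subset ?_ (Finset.subset_insert _ _)
    exact (MvPolynomial.support_monomial_subset).trans (by simp)
  rw [bwInner_eq_sum hs, Finset.sum_eq_single_of_mem j (Finset.mem_insert_self _ _)]
  · rw [MvPolynomial.coeff_monomial, if_pos rfl]
  · intro b _ hb
    rw [MvPolynomial.coeff_monomial, if_neg (fun h => hb h.symm), zero_mul, zero_div]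

/-- The linear form `∑ aₖ Xₖ`. -/
noncomputable def lin (a : Fin m → ℝ) : MvPolynomial (Fin m) ℝ :=
  ∑ k, MvPolynomial.C (a k) * MvPolynomial.X k

lemma lin_isHomogeneous (a : Fin m → ℝ) : (lin a).IsHomogeneous 1 :=
  MvPolynomial.IsHomogeneous.sum _ _ _ fun k _ =>
    MvPolynomial.isHomogeneous_C_mul_X _ _

lemma eval_lin (x a : Fin m → ℝ) : MvPolynomial.eval x (lin a) = ∑ k, a k * x k := by
  unfold lin
  rw [map_sum]
  simp

lemma lin_pow_isHomogeneous (a : Fin m → ℝ) (e : ℕ) : ((lin a) ^ e).IsHomogeneous e := by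
  simpa using MvPolynomial.IsHomogeneous.pow (lin_isHomogeneous a) e

lemma degree_eq_of_mem_support {p : MvPolynomial (Fin m) ℝ} {e : ℕ}
    (hp : p.IsHomogeneous e) {j : Fin m →₀ ℕ} (hj : j ∈ p.support) :
    ∑ i, j i = e := by
  have h := hp (MvPolynomial.mem_support_iff.mp hj)
  rw [show (1 : Fin m → ℕ) = fun _ => 1 from rfl, ← Finsupp.degree_eq_weight_one] at h
  rw [← h]
  exact (Finsupp.degree_eq_sum j).symm

lemma prod_pow_monomial (a : Fin m → ℝ) (k : Fin m → ℕ) :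
    (∏ i, (MvPolynomial.C (a i) * MvPolynomial.X i) ^ k i : MvPolynomial (Fin m) ℝ)
      = MvPolynomial.monomial (Finsupp.equivFunOnFinite.symm k) (∏ i, a i ^ k i) := by
  classical
  set s : Fin m →₀ ℕ := Finsupp.equivFunOnFinite.symm k with hsdef
  have hsk : ∀ i, s i = k i := fun i => rfl
  have h1 : (∏ i, (MvPolynomial.C (a i) * MvPolynomial.X i) ^ k i : MvPolynomial (Fin m) ℝ)
      = MvPolynomial.C (∏ i, a i ^ k i) * ∏ i, (MvPolynomial.X i : MvPolynomial (Fin m) ℝ) ^ k i := by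
    rw [map_prod, ← Finset.prod_mul_distrib]
    exact Finset.prod_congr rfl fun i _ => by rw [mul_pow, MvPolynomial.C_pow]
  have h2 : (∏ i, (MvPolynomial.X i : MvPolynomial (Fin m) ℝ) ^ k i)
      = ∏ i ∈ s.support, (MvPolynomial.X i : MvPolynomial (Fin m) ℝ) ^ s i := by
    refine (Finset.prod_subset (Finset.subset_univ _) fun i _ hi => ?_).symm
    rw [← hsk i, Finsupp.notMem_support_iff.mp hi, pow_zero]
  rw [h1, h2, MvPolynomial.prod_X_pow_eq_monomial, MvPolynomial.C_mul_monomial, mul_one]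

lemma coeff_lin_pow (a : Fin m → ℝ) (e : ℕ) {j : Fin m →₀ ℕ} (hj : ∑ i, j i = e) :
    ((lin a) ^ e).coeff j = (Nat.multinomial Finset.univ j : ℝ) * ∏ i, a i ^ j i := by
  classical
  unfold lin
  rw [Finset.sum_pow_eq_sum_piAntidiag, MvPolynomial.coeff_sum]
  have hjmem : (⇑j : Fin m → ℕ) ∈ Finset.piAntidiag Finset.univ e := by
    rw [Finset.mem_piAntidiag]
    exact ⟨hj, fun i _ => Finset.mem_univ i⟩
  rw [Finset.sum_eq_single_of_mem _ hjmem]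
  · rw [prod_pow_monomial, Finsupp.equivFunOnFinite_symm_coe]
    rw [← MvPolynomial.C_eq_coe_nat, MvPolynomial.coeff_C_mul,
      MvPolynomial.coeff_monomial, if_pos rfl]
  · intro k _ hk
    rw [prod_pow_monomial]
    rw [← MvPolynomial.C_eq_coe_nat, MvPolynomial.coeff_C_mul,
      MvPolynomial.coeff_monomial, if_neg, mul_zero]
    intro h
    exact hk (by rw [← h]; rfl)

/-- Reproducing property: `⟨p, (∑ aₖXₖ)^e⟩_W = p(a)` for `p` homogeneous of degree `e`. -/
lemma bwInner_lin_pow {e : ℕ} {p : MvPolynomial (Fin m) ℝ} (hp : p.IsHomogeneous e)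
    (a : Fin m → ℝ) : bwInner p ((lin a) ^ e) = MvPolynomial.eval a p := by
  classical
  conv_lhs => rw [← p.support_sum_monomial_coeff]
  rw [bwInner_sum_left, MvPolynomial.eval_eq']
  refine Finset.sum_congr rfl fun j hj => ?_
  have hdeg : ∑ i, j i = e := degree_eq_of_mem_support hp hj
  rw [bwInner_monomial_left, coeff_lin_pow a e hdeg]
  have hmult : (Nat.multinomial Finset.univ ⇑j : ℝ) ≠ 0 := by
    exact_mod_cast (Nat.multinomial_pos _ _).ne'
  field_simp

/-- Directional derivative of `p` at `x` in direction `v`, evaluated. -/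
noncomputable def dirEval (x v : Fin m → ℝ) (p : MvPolynomial (Fin m) ℝ) : ℝ :=
  ∑ k, MvPolynomial.eval x (MvPolynomial.pderiv k p) * v k

lemma dirEval_add (x v : Fin m → ℝ) (p q : MvPolynomial (Fin m) ℝ) :
    dirEval x v (p + q) = dirEval x v p + dirEval x v q := by
  unfold dirEval
  rw [← Finset.sum_add_distrib]
  refine Finset.sum_congr rfl fun k _ => ?_
  rw [map_add, map_add]
  ring

lemma dirEval_sub (x v : Fin m → ℝ) (p q : MvPolynomial (Fin m) ℝ) :
    dirEval x v (p - q) = dirEval x v p - dirEval x v q := by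
  unfold dirEval
  rw [← Finset.sum_sub_distrib]
  refine Finset.sum_congr rfl fun k _ => ?_
  rw [map_sub, map_sub]
  ring

lemma dirEval_sum {ι : Type*} (x v : Fin m → ℝ) (t : Finset ι)
    (F : ι → MvPolynomial (Fin m) ℝ) :
    dirEval x v (∑ i ∈ t, F i) = ∑ i ∈ t, dirEval x v (F i) := by
  classical
  induction t using Finset.induction_on with
  | empty => simp [dirEval]
  | insert _ _ h ih => rw [Finset.sum_insert h, Finset.sum_insert h, dirEval_add, ih]

lemma dirEval_mul (x v : Fin m → ℝ) (p q : MvPolynomial (Fin m) ℝ) :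
    dirEval x v (p * q) = dirEval x v p * MvPolynomial.eval x q
      + MvPolynomial.eval x p * dirEval x v q := by
  unfold dirEval
  rw [Finset.sum_mul, Finset.mul_sum, ← Finset.sum_add_distrib]
  refine Finset.sum_congr rfl fun k _ => ?_
  rw [MvPolynomial.pderiv_mul, map_add, map_mul, map_mul]
  ring

lemma dirEval_pow (x v : Fin m → ℝ) (q : MvPolynomial (Fin m) ℝ) (s : ℕ) :
    dirEval x v (q ^ (s + 1))
      = (s + 1 : ℝ) * (MvPolynomial.eval x q) ^ s * dirEval x v q := by
  induction s with
  | zero => simp [pow_one]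
  | succ s ih =>
    rw [pow_succ, dirEval_mul, ih, map_pow]
    push_cast
    ring

lemma dirEval_lin (x v a : Fin m → ℝ) : dirEval x v (lin a) = ∑ k, a k * v k := by
  unfold dirEval lin
  refine Finset.sum_congr rfl fun k _ => ?_
  rw [map_sum, map_sum]
  have h : ∑ i, MvPolynomial.eval x
      (MvPolynomial.pderiv k (MvPolynomial.C (a i) * MvPolynomial.X i)) = a k := by
    rw [Finset.sum_eq_single_of_mem k (Finset.mem_univ k)]
    · rw [MvPolynomial.pderiv_C_mul, MvPolynomial.pderiv_X_self]
      simp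
    · intro i _ hik
      rw [MvPolynomial.pderiv_C_mul, MvPolynomial.pderiv_X_of_ne hik]
      simp
  rw [h]

lemma sub_single_apply_self {j : Fin m →₀ ℕ} {k : Fin m} :
    (j - Finsupp.single k 1 : Fin m →₀ ℕ) k = j k - 1 := by
  rw [Finsupp.tsub_apply, Finsupp.single_eq_same]

lemma sub_single_apply_ne {j : Fin m →₀ ℕ} {k i : Fin m} (hi : i ≠ k) :
    (j - Finsupp.single k 1 : Fin m →₀ ℕ) i = j i := by
  rw [Finsupp.tsub_apply, Finsupp.single_eq_of_ne' (Ne.symm hi), Nat.sub_zero]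

lemma sum_sub_single {j : Fin m →₀ ℕ} {k : Fin m} (hk : j k ≠ 0) :
    ∑ i, (j - Finsupp.single k 1 : Fin m →₀ ℕ) i = (∑ i, j i) - 1 := by
  classical
  have h1 : ∑ i, j i = j k + ∑ i ∈ Finset.univ.erase k, j i :=
    (Finset.add_sum_erase _ _ (Finset.mem_univ k)).symm
  have h2 : ∑ i, (j - Finsupp.single k 1 : Fin m →₀ ℕ) i
      = (j - Finsupp.single k 1 : Fin m →₀ ℕ) k
        + ∑ i ∈ Finset.univ.erase k, (j - Finsupp.single k 1 : Fin m →₀ ℕ) i :=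
    (Finset.add_sum_erase _ _ (Finset.mem_univ k)).symm
  have h3 : ∑ i ∈ Finset.univ.erase k, (j - Finsupp.single k 1 : Fin m →₀ ℕ) i
      = ∑ i ∈ Finset.univ.erase k, j i :=
    Finset.sum_congr rfl fun i hi => sub_single_apply_ne (Finset.ne_of_mem_erase hi)
  rw [h2, h3, sub_single_apply_self, h1]
  omega

lemma nat_mult_sub_single {j : Fin m →₀ ℕ} {k : Fin m} (hk : j k ≠ 0) :
    j k * Nat.multinomial Finset.univ ⇑j
      = (∑ i, j i) * Nat.multinomial Finset.univ ((j - Finsupp.single k 1 : Fin m →₀ ℕ) : Fin m → ℕ) := by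
  classical
  set j' : Fin m →₀ ℕ := j - Finsupp.single k 1 with hj'def
  have hjk : 1 ≤ j k := Nat.one_le_iff_ne_zero.mpr hk
  have hj'k : j' k = j k - 1 := sub_single_apply_self
  have hsum : ∑ i, j i = (∑ i, j' i) + 1 := by
    have h1 : ∑ i, j' i = (∑ i, j i) - 1 := sum_sub_single hk
    have h2 : j k ≤ ∑ i, j i :=
      Finset.single_le_sum (f := fun i => j i) (fun i _ => Nat.zero_le _) (Finset.mem_univ k)
    omega
  have hfact : (j k).factorial = j k * (j' k).factorial := by
    rw [hj'k]
    exact (Nat.mul_factorial_pred hk).symm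
  have heraseP : ∏ i ∈ Finset.univ.erase k, (j' i).factorial
      = ∏ i ∈ Finset.univ.erase k, (j i).factorial :=
    Finset.prod_congr rfl fun i hi => by
      rw [sub_single_apply_ne (Finset.ne_of_mem_erase hi)]
  have hprod : ∏ i, (j i).factorial = j k * ∏ i, (j' i).factorial := by
    rw [← Finset.mul_prod_erase Finset.univ (fun i => (j i).factorial) (Finset.mem_univ k),
      ← Finset.mul_prod_erase Finset.univ (fun i => (j' i).factorial) (Finset.mem_univ k),
      heraseP, hfact]
    ring
  have hP' : 0 < ∏ i, (j' i).factorial :=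
    Finset.prod_pos fun i _ => Nat.factorial_pos _
  refine Nat.eq_of_mul_eq_mul_left hP' ?_
  have spec1 := Nat.multinomial_spec Finset.univ ⇑j
  have spec2 := Nat.multinomial_spec Finset.univ ⇑j'
  calc (∏ i, (j' i).factorial) * (j k * Nat.multinomial Finset.univ ⇑j)
      = (∏ i, (j i).factorial) * Nat.multinomial Finset.univ ⇑j := by rw [hprod]; ring
    _ = (∑ i, j i).factorial := spec1
    _ = (∑ i, j i) * ((∑ i, j' i)).factorial := by
        rw [hsum, Nat.factorial_succ]
    _ = (∏ i, (j' i).factorial) * ((∑ i, j i) * Nat.multinomial Finset.univ ⇑j') := by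
        rw [← spec2]; ring

/-- Derivative pairing: `e⟨p, (∑xₖXₖ)^{e-1}(∑vₖXₖ)⟩_W = Dp(x)v` for homogeneous `p`. -/
lemma bwInner_deriv {e : ℕ} (he : 1 ≤ e) {p : MvPolynomial (Fin m) ℝ}
    (hp : p.IsHomogeneous e) (x v : Fin m → ℝ) :
    (e : ℝ) * bwInner p ((lin x) ^ (e - 1) * lin v) = dirEval x v p := by
  classical
  have hcoeff : ∀ (j : Fin m →₀ ℕ), (∑ i, j i = e) →
      ((lin x) ^ (e - 1) * lin v).coeff j
        = ∑ k, v k * (if j k ≠ 0 then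
            (Nat.multinomial Finset.univ
              ((j - Finsupp.single k 1 : Fin m →₀ ℕ) : Fin m → ℕ) : ℝ)
            * ∏ i, x i ^ (j - Finsupp.single k 1 : Fin m →₀ ℕ) i else 0) := by
    intro j hdeg
    have hql : ((lin x) ^ (e - 1) : MvPolynomial (Fin m) ℝ) * lin v
        = ∑ k, MvPolynomial.C (v k) * ((lin x) ^ (e - 1) * MvPolynomial.X k) := by
      rw [show (lin v : MvPolynomial (Fin m) ℝ)
          = ∑ k, MvPolynomial.C (v k) * MvPolynomial.X k from rfl, Finset.mul_sum]
      exact Finset.sum_congr rfl fun k _ => by ring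
    rw [hql, MvPolynomial.coeff_sum]
    refine Finset.sum_congr rfl fun k _ => ?_
    rw [MvPolynomial.coeff_C_mul, MvPolynomial.coeff_mul_X']
    by_cases hk0 : j k = 0
    · rw [if_neg (fun h => (Finsupp.mem_support_iff.mp h) hk0), if_neg (by simpa using hk0)]
    · have hdeg' : ∑ i, (j - Finsupp.single k 1 : Fin m →₀ ℕ) i = e - 1 := by
        rw [sum_sub_single hk0, hdeg]
      rw [if_pos (Finsupp.mem_support_iff.mpr hk0), if_pos hk0,
        coeff_lin_pow x (e - 1) hdeg']
  conv_lhs => rw [← p.support_sum_monomial_coeff]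
  conv_rhs => rw [← p.support_sum_monomial_coeff]
  rw [bwInner_sum_left, dirEval_sum, Finset.mul_sum]
  refine Finset.sum_congr rfl fun j hj => ?_
  have hdeg : ∑ i, j i = e := degree_eq_of_mem_support hp hj
  have hdir : dirEval x v (MvPolynomial.monomial j (p.coeff j))
      = ∑ k, (p.coeff j * j k)
          * ((∏ i, x i ^ (j - Finsupp.single k 1 : Fin m →₀ ℕ) i) * v k) := by
    unfold dirEval
    refine Finset.sum_congr rfl fun k _ => ?_
    rw [MvPolynomial.pderiv_monomial, MvPolynomial.eval_monomial,
      Finsupp.prod_fintype _ _ (fun i => pow_zero (x i))]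
    ring
  rw [bwInner_monomial_left, hcoeff j hdeg, hdir, Finset.mul_sum, Finset.sum_div,
    Finset.mul_sum]
  refine Finset.sum_congr rfl fun k _ => ?_
  by_cases hk0 : j k = 0
  · rw [if_neg (by simpa using hk0), hk0]
    simp
  · rw [if_pos hk0]
    have hnat := nat_mult_sub_single (j := j) (k := k) hk0
    rw [hdeg] at hnat
    have hcast : (j k : ℝ) * (Nat.multinomial Finset.univ ⇑j : ℝ)
        = (e : ℝ) * (Nat.multinomial Finset.univ
            ((j - Finsupp.single k 1 : Fin m →₀ ℕ) : Fin m → ℕ) : ℝ) := by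
      exact_mod_cast hnat
    have hM : (Nat.multinomial Finset.univ ⇑j : ℝ) ≠ 0 := by
      exact_mod_cast (Nat.multinomial_pos _ _).ne'
    rw [mul_div_assoc', div_eq_iff hM]
    linear_combination (-(p.coeff j * v k
      * ∏ i, x i ^ (j - Finsupp.single k 1 : Fin m →₀ ℕ) i)) * hcast

/-- Bessel's inequality for two orthonormal vectors w.r.t. the Bombieri–Weyl product. -/
lemma bessel (p u w : MvPolynomial (Fin m) ℝ) (huu : bwInner u u = 1)
    (hww : bwInner w w = 1) (huw : bwInner u w = 0) :
    bwInner p u ^ 2 + bwInner p w ^ 2 ≤ bwInner p p := by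
  have hwu : bwInner w u = 0 := by rw [bwInner_comm]; exact huw
  have hup : bwInner u p = bwInner p u := bwInner_comm _ _
  have hwp : bwInner w p = bwInner p w := bwInner_comm _ _
  have h := bwInner_self_nonneg (p - bwInner p u • u - bwInner p w • w)
  simp only [bwInner_sub_left, bwInner_sub_right, bwInner_smul_left, bwInner_smul_right,
    huu, hww, huw, hwu, hup, hwp] at h
  nlinarith [h]

/-- The key inequality: for `p` homogeneous of degree `e ≥ 1`, `x` a unit vector and `v`
a unit vector orthogonal to `x`, `p(x)² + (Dp(x)v)²/e ≤ ‖p‖_W²`. -/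
lemma key_ineq {e : ℕ} (he : 1 ≤ e) {p : MvPolynomial (Fin m) ℝ} (hp : p.IsHomogeneous e)
    {x v : Fin m → ℝ} (hx : ∑ k, x k * x k = 1) (hv : ∑ k, v k * v k = 1)
    (hxv : ∑ k, x k * v k = 0) (hvx : ∑ k, v k * x k = 0) :
    MvPolynomial.eval x p ^ 2 + dirEval x v p ^ 2 / e ≤ bwInner p p := by
  have hepos : (0 : ℝ) < e := by exact_mod_cast Nat.lt_of_lt_of_le Nat.zero_lt_one he
  have hulin : MvPolynomial.eval x (lin x) = 1 := by rw [eval_lin]; exact hx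
  have hvlin : MvPolynomial.eval x (lin v) = 0 := by rw [eval_lin]; exact hvx
  have hdx : dirEval x v (lin x) = 0 := by rw [dirEval_lin]; exact hxv
  have hdv : dirEval x v (lin v) = 1 := by rw [dirEval_lin]; exact hv
  have hrhom : ((lin x) ^ (e - 1) * lin v).IsHomogeneous e := by
    have := MvPolynomial.IsHomogeneous.mul (lin_pow_isHomogeneous x (e - 1))
      (lin_isHomogeneous v)
    rwa [Nat.sub_add_cancel he] at this
  have huu : bwInner ((lin x) ^ e) ((lin x) ^ e) = 1 := by
    rw [bwInner_lin_pow (lin_pow_isHomogeneous x e) x, map_pow, hulin, one_pow]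
  have hdiru : dirEval x v ((lin x) ^ e) = 0 := by
    have h1 : e = (e - 1) + 1 := (Nat.sub_add_cancel he).symm
    rw [h1, dirEval_pow, hdx, mul_zero]
  have hdirr : dirEval x v ((lin x) ^ (e - 1) * lin v) = 1 := by
    rw [dirEval_mul, hvlin, mul_zero, zero_add, map_pow, hulin, one_pow, hdv, one_mul]
  have hur : bwInner ((lin x) ^ e) ((lin x) ^ (e - 1) * lin v) = 0 := by
    have h := bwInner_deriv he (lin_pow_isHomogeneous x e) x v
    rw [hdiru] at h
    rcases mul_eq_zero.mp h with h' | h'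
    · exact absurd h' hepos.ne'
    · exact h'
  have hrr : bwInner ((lin x) ^ (e - 1) * lin v) ((lin x) ^ (e - 1) * lin v) = 1 / e := by
    have h := bwInner_deriv he hrhom x v
    rw [hdirr] at h
    rw [eq_div_iff hepos.ne']
    linarith
  have hs2 : Real.sqrt e ^ 2 = (e : ℝ) := Real.sq_sqrt hepos.le
  have hww : bwInner (Real.sqrt e • ((lin x) ^ (e - 1) * lin v))
      (Real.sqrt e • ((lin x) ^ (e - 1) * lin v)) = 1 := by
    rw [bwInner_smul_left, bwInner_smul_right, hrr, ← mul_assoc, ← sq, hs2]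
    field_simp
  have huw : bwInner ((lin x) ^ e) (Real.sqrt e • ((lin x) ^ (e - 1) * lin v)) = 0 := by
    rw [bwInner_smul_right, hur, mul_zero]
  have hb := bessel p ((lin x) ^ e) (Real.sqrt e • ((lin x) ^ (e - 1) * lin v)) huu hww huw
  have hpu : bwInner p ((lin x) ^ e) = MvPolynomial.eval x p := bwInner_lin_pow hp x
  have hpr : bwInner p ((lin x) ^ (e - 1) * lin v) = dirEval x v p / e := by
    have h := bwInner_deriv he hp x v
    rw [eq_div_iff hepos.ne']
    linarith
  rw [hpu, bwInner_smul_right, hpr] at hb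
  have hsq : (Real.sqrt e * (dirEval x v p / e)) ^ 2 = dirEval x v p ^ 2 / e := by
    rw [mul_pow, div_pow, hs2]
    field_simp
  rw [hsq] at hb
  exact hb

end BWAux

open BWAux

/-- For every `x ∈ Sⁿ`, every `f ∈ H_d` with `‖f‖_W = 1`, and every `g ∈ Σ_ℝ(x)`,
one has `‖f - g‖_W ≥ κ̃(f,x)⁻¹`. -/
theorem inv_kappaAt_le_dist_of_mem_sigmaRx {n : ℕ} (hn : 1 ≤ n) (d : Fin n → ℕ)
    (hd : ∀ i, 1 ≤ d i) (x : Fin (n + 1) → ℝ) (hx : x ∈ unitSphere n)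
    (f : Fin n → MvPolynomial (Fin (n + 1)) ℝ) (hf : IsSystem d f)
    (hf1 : bwNormSys f = 1) (g : Fin n → MvPolynomial (Fin (n + 1)) ℝ)
    (hg : g ∈ SigmaRx d x) :
    (kappaAt d f x)⁻¹ ≤ ENNReal.ofReal (bwNormSys (f - g)) := by
  classical
  obtain ⟨hgsys, hgz, hgsing⟩ := hg
  obtain ⟨v, hv0, hvx, hvD⟩ := hgsing
  have hx1 : ∑ k, x k ^ 2 = 1 := hx
  -- normalize v
  have hS : 0 < ∑ k, v k ^ 2 := by
    obtain ⟨k0, hk0⟩ := Function.ne_iff.mp hv0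
    have h1 : 0 < v k0 ^ 2 :=
      lt_of_le_of_ne (sq_nonneg _) (Ne.symm (pow_ne_zero _ hk0))
    have h2 : v k0 ^ 2 ≤ ∑ k, v k ^ 2 :=
      Finset.single_le_sum (fun k _ => sq_nonneg (v k)) (Finset.mem_univ k0)
    linarith
  set c : ℝ := Real.sqrt (∑ k, v k ^ 2) with hc
  have hcpos : 0 < c := Real.sqrt_pos.mpr hS
  set w : Fin (n + 1) → ℝ := fun k => v k / c with hwdef
  have hw2 : ∑ k, w k ^ 2 = 1 := by
    have hcsq : c ^ 2 = ∑ k, v k ^ 2 := Real.sq_sqrt hS.le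
    simp only [hwdef, div_pow]
    rw [← Finset.sum_div, ← hcsq, div_self (pow_ne_zero _ hcpos.ne')]
  have hwx : ∑ k, w k * x k = 0 := by
    have h1 : ∑ k, w k * x k = (∑ k, v k * x k) / c := by
      rw [Finset.sum_div]
      exact Finset.sum_congr rfl fun k _ => by simp only [hwdef]; ring
    rw [h1, hvx, zero_div]
  have hwD : ∀ i, BWAux.dirEval x w (g i) = 0 := by
    intro i
    unfold BWAux.dirEval
    have h1 : ∑ k, MvPolynomial.eval x (MvPolynomial.pderiv k (g i)) * w k
        = (∑ k, MvPolynomial.eval x (MvPolynomial.pderiv k (g i)) * v k) / c := by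
      rw [Finset.sum_div]
      exact Finset.sum_congr rfl fun k _ => by simp only [hwdef]; ring
    rw [h1, hvD i, zero_div]
  -- bound sigmaMin by the value at w
  have hσ0 : 0 ≤ sigmaMin d f x := by
    refine Real.sInf_nonneg fun y hy => ?_
    obtain ⟨v', -, rfl⟩ := hy
    exact Real.sqrt_nonneg _
  have hσle : sigmaMin d f x ≤ Real.sqrt (∑ i,
      ((∑ k, MvPolynomial.eval x (MvPolynomial.pderiv k (f i)) * w k)
        / Real.sqrt (d i)) ^ 2) := by
    refine csInf_le ⟨0, fun y hy => ?_⟩ ⟨w, ⟨hwx, hw2⟩, rfl⟩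
    obtain ⟨v', -, rfl⟩ := hy
    exact Real.sqrt_nonneg _
  have hσ2 : sigmaMin d f x ^ 2 ≤ ∑ i,
      (∑ k, MvPolynomial.eval x (MvPolynomial.pderiv k (f i)) * w k) ^ 2 / (d i : ℝ) := by
    have h1 : sigmaMin d f x ^ 2 ≤ (Real.sqrt (∑ i,
        ((∑ k, MvPolynomial.eval x (MvPolynomial.pderiv k (f i)) * w k)
          / Real.sqrt (d i)) ^ 2)) ^ 2 := by
      exact pow_le_pow_left₀ hσ0 hσle 2
    rw [Real.sq_sqrt (Finset.sum_nonneg fun i _ => sq_nonneg _)] at h1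
    refine h1.trans_eq (Finset.sum_congr rfl fun i _ => ?_)
    rw [div_pow, Real.sq_sqrt (Nat.cast_nonneg _)]
  -- key inequality for each component
  have hkey : ∀ i, (MvPolynomial.eval x (f i)) ^ 2
      + (∑ k, MvPolynomial.eval x (MvPolynomial.pderiv k (f i)) * w k) ^ 2 / (d i : ℝ)
      ≤ bwInner ((f - g) i) ((f - g) i) := by
    intro i
    have hhom : ((f - g) i).IsHomogeneous (d i) := by
      show (f i - g i).IsHomogeneous (d i)
      exact (hf i).sub (hgsys i)
    have hx' : ∑ k, x k * x k = 1 := by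
      rw [← hx1]
      exact Finset.sum_congr rfl fun k _ => (pow_two (x k)).symm
    have hw' : ∑ k, w k * w k = 1 := by
      rw [← hw2]
      exact Finset.sum_congr rfl fun k _ => (pow_two (w k)).symm
    have hxw' : ∑ k, x k * w k = 0 := by
      rw [← hwx]
      exact Finset.sum_congr rfl fun k _ => mul_comm _ _
    have h := BWAux.key_ineq (hd i) hhom hx' hw' hxw' hwx
    have he1 : MvPolynomial.eval x ((f - g) i) = MvPolynomial.eval x (f i) := by
      show MvPolynomial.eval x (f i - g i) = _
      rw [map_sub, hgz i, sub_zero]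
    have he2 : BWAux.dirEval x w ((f - g) i)
        = ∑ k, MvPolynomial.eval x (MvPolynomial.pderiv k (f i)) * w k := by
      show BWAux.dirEval x w (f i - g i) = _
      rw [BWAux.dirEval_sub, hwD i, sub_zero]
      rfl
    rw [he1, he2] at h
    exact h
  -- sum it all up
  have hsum : sigmaMin d f x ^ 2 + ∑ i, (MvPolynomial.eval x (f i)) ^ 2
      ≤ ∑ i, bwInner ((f - g) i) ((f - g) i) := by
    have h1 : ∑ i, ((MvPolynomial.eval x (f i)) ^ 2
        + (∑ k, MvPolynomial.eval x (MvPolynomial.pderiv k (f i)) * w k) ^ 2 / (d i : ℝ))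
        ≤ ∑ i, bwInner ((f - g) i) ((f - g) i) :=
      Finset.sum_le_sum fun i _ => hkey i
    rw [Finset.sum_add_distrib] at h1
    linarith
  have hfinal : Real.sqrt (sigmaMin d f x ^ 2 + ∑ i, (MvPolynomial.eval x (f i)) ^ 2)
      ≤ bwNormSys (f - g) := Real.sqrt_le_sqrt hsum
  have hk : kappaAt d f x = (ENNReal.ofReal (Real.sqrt (sigmaMin d f x ^ 2
      + ∑ i, (MvPolynomial.eval x (f i)) ^ 2)))⁻¹ := by
    unfold kappaAt
    rw [hf1, ENNReal.ofReal_one, one_div]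
  rw [hk, inv_inv]
  exact ENNReal.ofReal_le_ofReal hfinal
end
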